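/- Suppose m ≤ n and there exists a subset S ⊂ {1,...,n} with |S| = m such that for every diagonal D with entries in [−1,1] the square matrix A_{:,S} + B_{:,S} D is nonsingular. Then for every b ∈ R^m, the equation A x − B|x| = b has a solution. -/

import Mathlib

open Matrix
open scoped NNReal

noncomputable section AVEaux

/-- The homotopy map `y ↦ A' y − t • B' |y|`. -/
def aveF {m : ℕ} (A' B' : Matrix (Fin m) (Fin m) ℝ) (t : ℝ) (y : Fin m → ℝ) : Fin m → ℝ :=
  A' *ᵥ y - t • (B' *ᵥ fun i => |y i|)

lemma aveF_sub_eq {m : ℕ} (A' B' : Matrix (Fin m) (Fin m) ℝ) {t : ℝ} (ht : t ∈ Set.Icc (0:ℝ) 1)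
    (y z : Fin m → ℝ) :
    ∃ d : Fin m → ℝ, (∀ i, |d i| ≤ 1) ∧
      aveF A' B' t y - aveF A' B' t z = (A' + B' * diagonal d) *ᵥ (y - z) := by
  classical
  refine ⟨fun i => if y i = z i then 0 else -(t * (|y i| - |z i|)) / (y i - z i), ?_, ?_⟩
  · intro i
    dsimp only
    by_cases h : y i = z i
    · simp [h]
    · have hyz : y i - z i ≠ 0 := sub_ne_zero.2 h
      rw [if_neg h, abs_div, div_le_one (abs_pos.2 hyz), abs_neg, abs_mul]
      calc |t| * |(|y i| - |z i|)| ≤ 1 * |y i - z i| := by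
            apply mul_le_mul
            · rw [abs_le]; constructor <;> linarith [ht.1, ht.2]
            · exact abs_abs_sub_abs_le_abs_sub _ _
            · positivity
            · norm_num
        _ = |y i - z i| := one_mul _
  · have hdiag : (diagonal fun i => if y i = z i then 0 else -(t * (|y i| - |z i|)) / (y i - z i)) *ᵥ
        (y - z) = (-t) • ((fun i => |y i|) - fun i => |z i|) := by
      funext i
      rw [mulVec_diagonal]
      by_cases h : y i = z i
      · simp [h]
      · have hyz : y i - z i ≠ 0 := sub_ne_zero.2 h
        rw [if_neg h]
        field_simp
        simp only [Pi.sub_apply, Pi.smul_apply, smul_eq_mul]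
        ring
    rw [add_mulVec, ← mulVec_mulVec, hdiag, mulVec_smul, mulVec_sub, mulVec_sub]
    unfold aveF
    module


set_option maxHeartbeats 1000000 in
lemma ave_cbound {m : ℕ} (hm : 0 < m) (A' B' : Matrix (Fin m) (Fin m) ℝ)
    (hg : ∀ d : Fin m → ℝ, (∀ i, |d i| ≤ 1) →
      Function.Bijective ((A' + B' * diagonal d).mulVec)) :
    ∃ c : ℝ, 0 < c ∧ ∀ d : Fin m → ℝ, (∀ i, |d i| ≤ 1) → ∀ u : Fin m → ℝ,
      c * ‖u‖ ≤ ‖(A' + B' * diagonal d) *ᵥ u‖ := by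
  classical
  haveI : Nonempty (Fin m) := ⟨⟨0, hm⟩⟩
  set K : Set ((Fin m → ℝ) × (Fin m → ℝ)) :=
    (Set.univ.pi fun _ : Fin m => Set.Icc (-1:ℝ) 1) ×ˢ Metric.sphere (0 : Fin m → ℝ) 1 with hKdef
  have hK : IsCompact K :=
    (isCompact_univ_pi fun _ => isCompact_Icc).prod (isCompact_sphere 0 1)
  have hKne : K.Nonempty := by
    refine ⟨(0, fun _ => 1), ?_, ?_⟩
    · intro i _; constructor <;> norm_num
    · simp [mem_sphere_iff_norm, pi_norm_const]
  have hcont : Continuous fun p : (Fin m → ℝ) × (Fin m → ℝ) =>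
      ‖(A' + B' * diagonal p.1) *ᵥ p.2‖ := by
    apply Continuous.norm
    exact Continuous.matrix_mulVec
      (continuous_const.add (continuous_const.matrix_mul continuous_fst.matrix_diagonal))
      continuous_snd
  obtain ⟨p₀, hp₀K, hmin⟩ := hK.exists_isMinOn hKne hcont.continuousOn
  have hp₀1 : ∀ i, |p₀.1 i| ≤ 1 := fun i => abs_le.2 (hp₀K.1 i (Set.mem_univ i))
  have hp₀2 : ‖p₀.2‖ = 1 := by
    have := hp₀K.2; rwa [mem_sphere_iff_norm, sub_zero] at this
  set c := ‖(A' + B' * diagonal p₀.1) *ᵥ p₀.2‖ with hc_def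
  have hc : 0 < c := by
    rw [hc_def, norm_pos_iff]
    intro h0
    have hinj := (hg p₀.1 hp₀1).1
    have : p₀.2 = 0 := hinj (by rw [h0, mulVec_zero])
    rw [this] at hp₀2; simp at hp₀2
  refine ⟨c, hc, ?_⟩
  intro d hd u
  rcases eq_or_ne u 0 with rfl | hu
  · simp
  · have hun : ‖u‖ ≠ 0 := norm_ne_zero_iff.2 hu
    have hvK : (d, ‖u‖⁻¹ • u) ∈ K := by
      refine ⟨fun i _ => abs_le.1 (hd i), ?_⟩
      rw [mem_sphere_iff_norm, sub_zero]
      exact norm_smul_inv_norm hu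
    have hle := isMinOn_iff.mp hmin _ hvK
    dsimp only at hle
    rw [← hc_def] at hle
    rw [mulVec_smul, norm_smul, norm_inv, norm_norm] at hle
    rw [mul_comm]
    calc ‖u‖ * c ≤ ‖u‖ * (‖u‖⁻¹ * ‖(A' + B' * diagonal d) *ᵥ u‖) := by
          exact mul_le_mul_of_nonneg_left hle (norm_nonneg u)
      _ = ‖(A' + B' * diagonal d) *ᵥ u‖ := by field_simp

lemma ave_square_solvable {m : ℕ} (hm : 0 < m) (A' B' : Matrix (Fin m) (Fin m) ℝ)
    (hg : ∀ d : Fin m → ℝ, (∀ i, |d i| ≤ 1) →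
      Function.Bijective ((A' + B' * diagonal d).mulVec)) :
    ∀ b : Fin m → ℝ, ∃ y : Fin m → ℝ, A' *ᵥ y - B' *ᵥ (fun i => |y i|) = b := by
  classical
  obtain ⟨c, hc, hcb⟩ := ave_cbound hm A' B' hg
  -- co-Lipschitz estimate for the homotopy
  have coL : ∀ t ∈ Set.Icc (0:ℝ) 1, ∀ y z : Fin m → ℝ,
      c * ‖y - z‖ ≤ ‖aveF A' B' t y - aveF A' B' t z‖ := by
    intro t ht y z
    obtain ⟨d, hd, heq⟩ := aveF_sub_eq A' B' ht y z
    rw [heq]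
    exact hcb d hd (y - z)
  have hinj : ∀ t ∈ Set.Icc (0:ℝ) 1, Function.Injective (aveF A' B' t) := by
    intro t ht y z h
    have := coL t ht y z
    rw [h, sub_self, norm_zero] at this
    have hn : ‖y - z‖ ≤ 0 := nonpos_of_mul_nonpos_right ?_ hc
    · exact sub_eq_zero.1 (norm_le_zero_iff.1 hn)
    · linarith [this]
  -- operator norm bound for B'
  set Lb := ‖LinearMap.toContinuousLinearMap (Matrix.mulVecLin B')‖ with hLb_def
  have hLb0 : 0 ≤ Lb := norm_nonneg _
  have hLb : ∀ w : Fin m → ℝ, ‖B' *ᵥ w‖ ≤ Lb * ‖w‖ := by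
    intro w
    have := (LinearMap.toContinuousLinearMap (Matrix.mulVecLin B')).le_opNorm w
    simpa using this
  have habs : ∀ y z : Fin m → ℝ, ‖(fun i => |y i|) - fun i => |z i|‖ ≤ ‖y - z‖ := by
    intro y z
    refine (pi_norm_le_iff_of_nonneg (norm_nonneg _)).2 fun i => ?_
    have h1 : |(|y i| - |z i|)| ≤ |y i - z i| := abs_abs_sub_abs_le_abs_sub _ _
    have h2 : ‖(y - z) i‖ ≤ ‖y - z‖ := norm_le_pi_norm (y - z) i
    simp only [Pi.sub_apply, Real.norm_eq_abs] at *
    linarith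
  set δ := c / (2 * (Lb + 1)) with hδ_def
  have hδ : 0 < δ := by positivity
  -- the continuation step
  have step : ∀ t ∈ Set.Icc (0:ℝ) 1, ∀ t' : ℝ, |t' - t| ≤ δ →
      Function.Surjective (aveF A' B' t) → Function.Surjective (aveF A' B' t') := by
    intro t ht t' hdist hsurj b
    have hbij : Function.Bijective (aveF A' B' t) := ⟨hinj t ht, hsurj⟩
    set e := Equiv.ofBijective _ hbij with he_def
    set Φ : (Fin m → ℝ) → (Fin m → ℝ) :=
      fun y => e.symm (b + (t' - t) • (B' *ᵥ fun i => |y i|)) with hΦ_def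
    have hFe : ∀ u, aveF A' B' t (e.symm u) = u := fun u => e.apply_symm_apply u
    have hcontr : ContractingWith (1/2) Φ := by
      constructor
      · exact one_half_lt_one
      · apply LipschitzWith.of_dist_le_mul
        intro y z
        rw [dist_eq_norm, dist_eq_norm]
        have h1 : c * ‖Φ y - Φ z‖ ≤ ‖aveF A' B' t (Φ y) - aveF A' B' t (Φ z)‖ :=
          coL t ht _ _
        rw [hΦ_def] at h1
        simp only [hFe] at h1
        have h2 : (b + (t' - t) • (B' *ᵥ fun i => |y i|)) -
            (b + (t' - t) • (B' *ᵥ fun i => |z i|)) =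
            (t' - t) • (B' *ᵥ ((fun i => |y i|) - fun i => |z i|)) := by
          rw [mulVec_sub, smul_sub]; abel
        rw [h2, norm_smul, Real.norm_eq_abs] at h1
        have h3 : |t' - t| * ‖B' *ᵥ ((fun i => |y i|) - fun i => |z i|)‖ ≤
            δ * (Lb * ‖y - z‖) := by
          apply mul_le_mul hdist ((hLb _).trans ?_) (norm_nonneg _) (le_of_lt hδ)
          exact mul_le_mul_of_nonneg_left (habs y z) hLb0
        have hkey : δ * Lb ≤ c / 2 := by
          rw [hδ_def, div_mul_eq_mul_div, div_le_div_iff₀ (by positivity) (by norm_num)]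
          nlinarith [hLb0, hc]
        have h4 : δ * (Lb * ‖y - z‖) ≤ (c/2) * ‖y - z‖ := by
          rw [← mul_assoc]
          exact mul_le_mul_of_nonneg_right hkey (norm_nonneg _)
        have hfin : c * ‖Φ y - Φ z‖ ≤ (c/2) * ‖y - z‖ := by
          simp only [hΦ_def]
          exact h1.trans (h3.trans h4)
        push_cast
        nlinarith [norm_nonneg (Φ y - Φ z), norm_nonneg (y - z)]
    set y := ContractingWith.fixedPoint Φ hcontr with hy_def
    have hy : Φ y = y := hcontr.fixedPoint_isFixedPt
    refine ⟨y, ?_⟩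
    have h5 : aveF A' B' t y = b + (t' - t) • (B' *ᵥ fun i => |y i|) := by
      conv_lhs => rw [← hy]
      exact hFe _
    have h6 : aveF A' B' t' y = aveF A' B' t y - (t' - t) • (B' *ᵥ fun i => |y i|) := by
      unfold aveF; module
    rw [h6, h5]
    abel
  -- base case : the linear map is surjective
  have base : Function.Surjective (aveF A' B' 0) := by
    have h0 : aveF A' B' 0 = (A' + B' * diagonal (0 : Fin m → ℝ)).mulVec := by
      funext y
      unfold aveF
      have hd0 : diagonal (0 : Fin m → ℝ) = 0 := diagonal_zero
      rw [hd0, mul_zero, add_zero, zero_smul, sub_zero]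
    rw [h0]
    exact (hg 0 (fun i => by simp)).2
  -- reach t = 1 in finitely many steps
  have mem01 : ∀ a : ℝ, 0 ≤ a → min a 1 ∈ Set.Icc (0:ℝ) 1 :=
    fun a ha => ⟨le_min ha zero_le_one, min_le_right _ _⟩
  have reach : ∀ k : ℕ, Function.Surjective (aveF A' B' (min ((k : ℝ) * δ) 1)) := by
    intro k
    induction k with
    | zero =>
      have : min ((0:ℕ) * δ) 1 = (0:ℝ) := by
        rw [Nat.cast_zero, zero_mul]
        exact min_eq_left zero_le_one
      rw [this]
      exact base
    | succ k ih =>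
      set a : ℝ := (k : ℝ) * δ with ha_def
      have ha0 : 0 ≤ a := by positivity
      have ha' : ((k + 1 : ℕ) : ℝ) * δ = a + δ := by push_cast; ring
      rw [ha']
      refine step (min a 1) (mem01 a ha0) _ ?_ ih
      rcases le_total a 1 with h | h
      · rw [min_eq_left h, abs_le]
        have hlow : a - δ ≤ min (a + δ) 1 := le_min (by linarith) (by linarith)
        have hup : min (a + δ) 1 ≤ a + δ := min_le_left _ _
        constructor <;> linarith
      · rw [min_eq_right h, min_eq_right (by linarith : (1:ℝ) ≤ a + δ)]
        simp [le_of_lt hδ]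
  -- pick k with k * δ ≥ 1
  obtain ⟨k, hk⟩ := exists_nat_ge (1 / δ)
  have h1k : min ((k : ℝ) * δ) 1 = 1 := by
    apply min_eq_right
    rw [div_le_iff₀ hδ] at hk
    linarith
  have hsurj1 : Function.Surjective (aveF A' B' 1) := by
    rw [← h1k]; exact reach k
  intro b
  obtain ⟨y, hy⟩ := hsurj1 b
  refine ⟨y, ?_⟩
  unfold aveF at hy
  rwa [one_smul] at hy

end AVEaux

theorem gave_solvable_of_submatrix {m n : ℕ} (hmn : m ≤ n)
    (A B : Matrix (Fin m) (Fin n) ℝ) (g : Fin m ↪ Fin n)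
    (hg : ∀ d : Fin m → ℝ, (∀ i, |d i| ≤ 1) →
      Function.Bijective ((A.submatrix id g + B.submatrix id g * Matrix.diagonal d).mulVec)) :
    ∀ b : Fin m → ℝ, ∃ x : Fin n → ℝ, A.mulVec x - B.mulVec (fun j => |x j|) = b := by
  classical
  rcases Nat.eq_zero_or_pos m with rfl | hm
  · intro b
    exact ⟨0, funext fun i => i.elim0⟩
  intro b
  obtain ⟨y, hy⟩ := ave_square_solvable hm (A.submatrix id g) (B.submatrix id g) hg b
  have key : ∀ (M : Matrix (Fin m) (Fin n) ℝ) (w : Fin m → ℝ),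
      M *ᵥ (Function.extend g w 0) = (M.submatrix id g) *ᵥ w := by
    intro M w
    funext k
    show ∑ j, M k j * Function.extend g w 0 j = ∑ i, M.submatrix id g k i * w i
    rw [← Finset.sum_subset (Finset.subset_univ (Finset.univ.image g))]
    · rw [Finset.sum_image (fun a _ b _ h => g.injective h)]
      apply Finset.sum_congr rfl
      intro i _
      rw [g.injective.extend_apply]
      rfl
    · intro j _ hj
      have hnex : ¬ ∃ i, g i = j := by
        intro ⟨i, hi⟩
        exact hj (Finset.mem_image.2 ⟨i, Finset.mem_univ i, hi⟩)
      rw [Function.extend_apply' _ _ _ hnex]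
      simp
  have habs : (fun j => |Function.extend g y 0 j|) = Function.extend g (fun i => |y i|) 0 := by
    funext j
    by_cases h : ∃ i, g i = j
    · obtain ⟨i, rfl⟩ := h
      rw [g.injective.extend_apply, g.injective.extend_apply]
    · rw [Function.extend_apply' _ _ _ h, Function.extend_apply' _ _ _ h]
      exact abs_zero
  refine ⟨Function.extend g y 0, ?_⟩
  rw [habs, key A y, key B (fun i => |y i|)]
  exact hy
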